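/- Define g̃_ε : [0,∞) → ℝ by g̃_ε(x) = 1/(ε² + x²) for x > ε/√3 and g̃_ε(x) = −(3√3)/(8ε³) · (x − ε/√3) + 3/(4ε²) for 0 ≤ x ≤ ε/√3, where ε > 0. Then g̃_ε is convex on [0,∞), and setting f̃_ε(x) := g̃_ε(√x), one has f̃_{(3/(2√2))ε}(x) ≤ 1/(ε² + x) ≤ f̃_ε(x) for all x ≥ 0. -/

import Mathlib

private lemma aux_lower (ε σ τ s : ℝ) (hε : 0 < ε) (hσ0 : 0 < σ) (hτ0 : 0 < τ)
    (hσ3 : σ^2 = 3) (hτ2 : τ^2 = 2) (hs0 : 0 ≤ s) :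
    -(3*σ/(8*(3/(2*τ)*ε)^3))*(s - (3/(2*τ)*ε)/σ) + 3/(4*(3/(2*τ)*ε)^2) ≤ 1/(ε^2+s^2) := by
  have hεne : ε ≠ 0 := ne_of_gt hε
  have hσne : σ ≠ 0 := ne_of_gt hσ0
  have hτne : τ ≠ 0 := ne_of_gt hτ0
  have hform : -(3*σ/(8*(3/(2*τ)*ε)^3))*(s - (3/(2*τ)*ε)/σ) + 3/(4*(3/(2*τ)*ε)^2)
      = (27*ε - 6*(σ*τ)*s)/(27*ε^3) := by
    field_simp
    linear_combination (3888*ε - 864*τ*σ*s) * hτ2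
  rw [hform, div_le_div_iff₀ (by positivity) (by positivity)]
  have hr2 : (σ*τ)^2 = 6 := by rw [mul_pow, hσ3, hτ2]; norm_num
  have hr0 : 0 < σ*τ := mul_pos hσ0 hτ0
  have key : 0 ≤ 2*(σ*τ)*(ε^2+s^2) - 9*ε*s := by
    nlinarith [sq_nonneg (4*(σ*τ)*s - 9*ε), hr2, hr0, sq_nonneg s, sq_nonneg ε,
      mul_pos hr0 hε]
  nlinarith [mul_nonneg hs0 key]



theorem stmt_14 (G : ℝ → ℝ → ℝ)
    (hG_above : ∀ ε : ℝ, 0 < ε → ∀ x : ℝ, ε / Real.sqrt 3 < x →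
      G ε x = 1 / (ε ^ 2 + x ^ 2))
    (hG_below : ∀ ε : ℝ, 0 < ε → ∀ x : ℝ, 0 ≤ x → x ≤ ε / Real.sqrt 3 →
      G ε x = -(3 * Real.sqrt 3 / (8 * ε ^ 3)) * (x - ε / Real.sqrt 3)
                + 3 / (4 * ε ^ 2)) :
    ∀ ε : ℝ, 0 < ε →
      ConvexOn ℝ (Set.Ici (0 : ℝ)) (G ε) ∧
      (∀ x : ℝ, 0 ≤ x →
        G (3 / (2 * Real.sqrt 2) * ε) (Real.sqrt x) ≤ 1 / (ε ^ 2 + x) ∧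
        1 / (ε ^ 2 + x) ≤ G ε (Real.sqrt x)) := by
  have hσ3 : Real.sqrt 3 ^ 2 = 3 := Real.sq_sqrt (by norm_num)
  have hσ0 : (0:ℝ) < Real.sqrt 3 := Real.sqrt_pos.mpr (by norm_num)
  set σ : ℝ := Real.sqrt 3 with hσdef
  clear_value σ
  have hσne : σ ≠ 0 := ne_of_gt hσ0
  -- generic lemmas (for any positive ε)
  have hLg : ∀ ε x : ℝ, 0 < ε → ε ≤ σ*x → (9*ε - 3*σ*x)/(8*ε^3) ≤ 1/(ε^2+x^2) := by
    intro ε x hε hx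
    rw [div_le_div_iff₀ (by positivity) (by positivity)]
    have hI : (9*ε - 3*σ*x)*(ε^2+x^2) - 8*ε^3 = (ε - σ*x)^3 := by
      linear_combination (σ*x^3 - 3*ε*x^2) * hσ3
    have hcube : (ε - σ*x)^3 ≤ 0 := Odd.pow_nonpos ⟨1, by norm_num⟩ (by linarith)
    linarith
  have hgL : ∀ ε x : ℝ, 0 < ε → σ*x ≤ ε → 1/(ε^2+x^2) ≤ (9*ε - 3*σ*x)/(8*ε^3) := by
    intro ε x hε hx
    rw [div_le_div_iff₀ (by positivity) (by positivity)]
    have hI : (9*ε - 3*σ*x)*(ε^2+x^2) - 8*ε^3 = (ε - σ*x)^3 := by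
      linear_combination (σ*x^3 - 3*ε*x^2) * hσ3
    have hcube : 0 ≤ (ε - σ*x)^3 := pow_nonneg (by linarith) 3
    linarith
  have hslope : ∀ ε y : ℝ, 0 < ε → 0 ≤ y →
      -(3*σ/(8*ε^3)) ≤ -(2*y)/((ε^2+y^2)^2) := by
    intro ε y hε hy
    rw [neg_div, neg_le_neg_iff]
    rw [div_le_div_iff₀ (by positivity) (by positivity)]
    have hI : 3*σ*(ε^2+y^2)^2 - 16*ε^3*y = (σ*y-ε)^2*(σ*y^2 + 2*ε*y + 3*σ*ε^2) := by
      linear_combination (-(σ*y^4) - 3*σ*ε^2*y^2 + 6*ε^3*y) * hσ3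
    have h2 : 0 ≤ (σ*y-ε)^2*(σ*y^2 + 2*ε*y + 3*σ*ε^2) := by
      apply mul_nonneg (sq_nonneg _)
      have : 0 ≤ σ*y^2 := by positivity
      nlinarith [mul_nonneg hε.le hy, mul_pos hσ0 (mul_pos hε hε)]
    nlinarith
  have htang : ∀ ε x y : ℝ, 0 < ε → ε ≤ σ*x → ε ≤ σ*y →
      1/(ε^2+y^2) + (-(2*y)/((ε^2+y^2)^2))*(x-y) ≤ 1/(ε^2+x^2) := by
    intro ε x y hε hx hy
    have hid : 1/(ε^2+x^2) - (1/(ε^2+y^2) + (-(2*y)/((ε^2+y^2)^2))*(x-y))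
        = ((x-y)^2*(2*x*y + y^2 - ε^2)) / ((ε^2+x^2)*(ε^2+y^2)^2) := by
      field_simp
      ring
    have hkey : 0 ≤ 2*x*y + y^2 - ε^2 := by
      have h1 : ε*ε ≤ (σ*x)*(σ*y) := mul_le_mul hx hy hε.le (le_trans hε.le hx)
      have e1 : (σ*x)*(σ*y) = 3*(x*y) := by
        rw [show (σ*x)*(σ*y) = σ^2*(x*y) from by ring, hσ3]
      have h2 : ε*ε ≤ (σ*y)*(σ*y) := mul_le_mul hy hy hε.le (le_trans hε.le hy)
      have e2 : (σ*y)*(σ*y) = 3*(y*y) := by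
        rw [show (σ*y)*(σ*y) = σ^2*(y*y) from by ring, hσ3]
      nlinarith [h1, h2, e1, e2]
    have : 0 ≤ ((x-y)^2*(2*x*y + y^2 - ε^2)) / ((ε^2+x^2)*(ε^2+y^2)^2) :=
      div_nonneg (mul_nonneg (sq_nonneg _) hkey) (by positivity)
    linarith
  intro ε hε
  have hεne : ε ≠ 0 := ne_of_gt hε
  have hc0 : 0 < ε / σ := div_pos hε hσ0
  have hσc : σ * (ε / σ) = ε := by field_simp
  -- closed form of the linear piece
  have hLb : ∀ x : ℝ, 0 ≤ x → x ≤ ε/σ → G ε x = (9*ε - 3*σ*x)/(8*ε^3) := by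
    intro x hx0 hxc
    rw [hG_below ε hε x hx0 hxc]
    field_simp
    ring
  -- supporting line at each point
  have hsupp : ∀ y : ℝ, 0 ≤ y → ∀ x : ℝ, 0 ≤ x →
      G ε y + (if y ≤ ε/σ then -(3*σ/(8*ε^3)) else -(2*y)/((ε^2+y^2)^2)) * (x - y)
        ≤ G ε x := by
    intro y hy x hx
    by_cases hyc : y ≤ ε/σ
    · rw [if_pos hyc, hLb y hy hyc]
      have hL : (9*ε - 3*σ*y)/(8*ε^3) + -(3*σ/(8*ε^3)) * (x - y)
          = (9*ε - 3*σ*x)/(8*ε^3) := by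
        field_simp
        ring
      rw [hL]
      by_cases hxc : x ≤ ε/σ
      · rw [hLb x hx hxc]
      · push_neg at hxc
        rw [hG_above ε hε x hxc]
        refine hLg ε x hε ?_
        calc ε = σ * (ε/σ) := hσc.symm
        _ ≤ σ * x := by nlinarith
    · push_neg at hyc
      rw [if_neg (not_le.mpr hyc), hG_above ε hε y hyc]
      have hεσy : ε ≤ σ*y := by
        calc ε = σ * (ε/σ) := hσc.symm
        _ ≤ σ * y := by nlinarith
      by_cases hxc : x ≤ ε/σ
      · rw [hLb x hx hxc]
        have h1 : 1/(ε^2+y^2) + (-(2*y)/((ε^2+y^2)^2))*(ε/σ - y) ≤ 1/(ε^2+(ε/σ)^2) :=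
          htang ε (ε/σ) y hε (le_of_eq hσc.symm) hεσy
        have h2 : -(3*σ/(8*ε^3)) ≤ -(2*y)/((ε^2+y^2)^2) := hslope ε y hε hy
        have h3 : x - ε/σ ≤ 0 := by linarith
        have h4 : (-(2*y)/((ε^2+y^2)^2)) * (x - ε/σ) ≤ -(3*σ/(8*ε^3)) * (x - ε/σ) :=
          mul_le_mul_of_nonpos_right h2 h3
        have hc2 : (ε/σ)^2 = ε^2/3 := by rw [div_pow, hσ3]
        have h5 : 1/(ε^2+(ε/σ)^2) = (9*ε - 3*σ*(ε/σ))/(8*ε^3) := by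
          rw [hc2]
          field_simp
          ring
        have e1 : (-(2*y)/((ε^2+y^2)^2))*(x-y)
            = (-(2*y)/((ε^2+y^2)^2))*(ε/σ - y) + (-(2*y)/((ε^2+y^2)^2))*(x - ε/σ) := by
          ring
        have e2 : (9*ε - 3*σ*x)/(8*ε^3)
            = (9*ε - 3*σ*(ε/σ))/(8*ε^3) + -(3*σ/(8*ε^3))*(x - ε/σ) := by
          field_simp
          ring
        linarith
      · push_neg at hxc
        rw [hG_above ε hε x hxc]
        refine htang ε x y hε ?_ hεσy
        calc ε = σ * (ε/σ) := hσc.symm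
        _ ≤ σ * x := by nlinarith
  constructor
  · -- convexity
    refine ⟨convex_Ici 0, ?_⟩
    intro x hx y hy a b ha hb hab
    simp only [smul_eq_mul, Set.mem_Ici] at *
    set p : ℝ := a*x + b*y with hp'
    have hp : 0 ≤ p := add_nonneg (mul_nonneg ha hx) (mul_nonneg hb hy)
    have h1 := hsupp p hp x hx
    have h2 := hsupp p hp y hy
    set d : ℝ := (if p ≤ ε/σ then -(3*σ/(8*ε^3)) else -(2*p)/((ε^2+p^2)^2)) with hd
    calc G ε p = a*(G ε p + d*(x - p)) + b*(G ε p + d*(y - p)) := by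
          linear_combination (-(G ε p) + d*p) * hab + d * hp'
    _ ≤ a * G ε x + b * G ε y :=
        add_le_add (mul_le_mul_of_nonneg_left h1 ha) (mul_le_mul_of_nonneg_left h2 hb)
  · -- sandwich
    intro x hx
    have hs0 : 0 ≤ Real.sqrt x := Real.sqrt_nonneg x
    have hs2 : Real.sqrt x ^ 2 = x := Real.sq_sqrt hx
    set s : ℝ := Real.sqrt x with hsdef
    clear_value s
    have hτ2 : Real.sqrt 2 ^ 2 = 2 := Real.sq_sqrt (by norm_num)
    have hτ0 : (0:ℝ) < Real.sqrt 2 := Real.sqrt_pos.mpr (by norm_num)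
    set τ : ℝ := Real.sqrt 2 with hτdef
    clear_value τ
    have hτne : τ ≠ 0 := ne_of_gt hτ0
    set ε' : ℝ := 3 / (2*τ) * ε with hε'def
    clear_value ε'
    have hε' : 0 < ε' := by
      rw [hε'def]
      have : 0 < 3/(2*τ) := by positivity
      positivity
    have hε'2 : ε'^2 = 9/8*ε^2 := by
      rw [hε'def, mul_pow, div_pow, mul_pow, hτ2]
      ring
    constructor
    · -- lower bound
      by_cases hsc : s ≤ ε'/σ
      · rw [hG_below ε' hε' s hs0 hsc, ← hs2, hε'def]
        exact aux_lower ε σ τ s hε hσ0 hτ0 hσ3 hτ2 hs0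
      · push_neg at hsc
        rw [hG_above ε' hε' s hsc, ← hs2]
        apply one_div_le_one_div_of_le (by positivity)
        nlinarith [hε'2, sq_nonneg s]
    · -- upper bound
      by_cases hsc : s ≤ ε/σ
      · rw [hLb s hs0 hsc, ← hs2]
        refine hgL ε s hε ?_
        calc σ * s ≤ σ * (ε/σ) := by nlinarith
        _ = ε := hσc
      · push_neg at hsc
        rw [hG_above ε hε s hsc, ← hs2]
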